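/- Let A, B, C be non-collinear points in the Euclidean plane with dist(A,B) = dist(B,C). Then for every point D on the closed segment AC, the distance from D to the line through A and B plus the distance from D to the line through B and C equals the distance from A to the line through B and C. -/

import Mathlib

open RealInnerProductSpace

noncomputable section

local notation "E" => EuclideanSpace ℝ (Fin 2)

/-- Distance from a point to the line through two points, explicit formula. -/
lemma infDist_line_eq (P Q X : E) (hq : Q ≠ P) :
    Metric.infDist X (affineSpan ℝ ({P, Q} : Set E) : Set E) =
      ‖(X - P) - ((inner ℝ (X - P) (Q - P) : ℝ) / ‖Q - P‖ ^ 2) • (Q - P)‖ := by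
  set v : E := Q - P with hvdef
  have hv : v ≠ 0 := sub_ne_zero.2 hq
  have hv2 : ‖v‖ ^ 2 ≠ 0 := pow_ne_zero _ (norm_ne_zero_iff.2 hv)
  set c : ℝ := (inner ℝ (X - P) (v) : ℝ) / ‖v‖ ^ 2 with hcdef
  set y : E := P + c • v with hydef
  have hy : y ∈ (affineSpan ℝ ({P, Q} : Set E) : Set E) := by
    have hmem : c • v ∈ (affineSpan ℝ ({P, Q} : Set E)).direction := by
      rw [direction_affineSpan]
      exact smul_vsub_rev_mem_vectorSpan_pair c P Q
    have := AffineSubspace.vadd_mem_of_mem_direction hmem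
      (left_mem_affineSpan_pair ℝ P Q)
    simpa [hydef, add_comm] using this
  have hXy : X - y = (X - P) - c • v := by rw [hydef]; abel
  have horth : (inner ℝ (X - y) (v) : ℝ) = 0 := by
    rw [hXy, inner_sub_left, real_inner_smul_left, real_inner_self_eq_norm_sq, hcdef]
    field_simp
    ring
  apply le_antisymm
  · exact (Metric.infDist_le_dist_of_mem hy).trans_eq (by rw [dist_eq_norm, hXy])
  · haveI : Nonempty (affineSpan ℝ ({P, Q} : Set E) : Set E) := ⟨⟨y, hy⟩⟩
    rw [Metric.infDist_eq_iInf]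
    refine le_ciInf fun zz => ?_
    obtain ⟨z, hz⟩ := zz
    have hzd : z -ᵥ P ∈ (affineSpan ℝ ({P, Q} : Set E)).direction :=
      AffineSubspace.vsub_mem_direction hz (left_mem_affineSpan_pair ℝ P Q)
    rw [direction_affineSpan, mem_vectorSpan_pair_rev] at hzd
    obtain ⟨r, hr⟩ := hzd
    have hr : r • (Q - P) + P = z := by
      simp only [vsub_eq_sub] at hr
      rw [hr]
      abel
    have hz' : X - z = (X - y) + (c - r) • v := by
      rw [hydef, ← hr, hvdef]
      module
    have hsq : ‖X - z‖ ^ 2 = ‖X - y‖ ^ 2 + ((c - r) * ‖v‖) ^ 2 := by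
      rw [hz', norm_add_sq_real, real_inner_smul_right, horth, norm_smul]
      simp [mul_pow, sq_abs]
    show ‖X - P - c • v‖ ≤ ‖X - z‖
    rw [← hXy]
    nlinarith [norm_nonneg (X - y), norm_nonneg (X - z), sq_nonneg ((c - r) * ‖v‖)]

lemma resid_eq_sqrt (u v : E) (hv : v ≠ 0) :
    ‖u - ((inner ℝ (u) (v) : ℝ) / ‖v‖ ^ 2) • v‖ = Real.sqrt (‖u‖ ^ 2 - (inner ℝ (u) (v) : ℝ) ^ 2 / ‖v‖ ^ 2) := by
  have hv2 : ‖v‖ ^ 2 ≠ 0 := pow_ne_zero _ (norm_ne_zero_iff.2 hv)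
  rw [← Real.sqrt_sq (norm_nonneg _)]
  congr 1
  rw [← real_inner_self_eq_norm_sq, inner_sub_sub_self, real_inner_smul_right,
    real_inner_smul_left, real_inner_smul_left, real_inner_smul_right,
    real_inner_self_eq_norm_sq, real_inner_self_eq_norm_sq, real_inner_comm u v]
  field_simp
  ring

theorem stmt_8 (A B C : EuclideanSpace ℝ (Fin 2))
    (h : ¬ Collinear ℝ ({A, B, C} : Set (EuclideanSpace ℝ (Fin 2))))
    (hAB : dist A B = dist B C) :
    ∀ D ∈ segment ℝ A C,
      Metric.infDist D (affineSpan ℝ ({A, B} : Set (EuclideanSpace ℝ (Fin 2))) : Set (EuclideanSpace ℝ (Fin 2))) +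
        Metric.infDist D (affineSpan ℝ ({B, C} : Set (EuclideanSpace ℝ (Fin 2))) : Set (EuclideanSpace ℝ (Fin 2))) =
      Metric.infDist A (affineSpan ℝ ({B, C} : Set (EuclideanSpace ℝ (Fin 2))) : Set (EuclideanSpace ℝ (Fin 2))) := by
  intro D hD
  have hBA : B ≠ A := by
    rintro rfl
    exact h (by simpa [Set.insert_comm, Set.pair_comm] using collinear_pair ℝ B C)
  have hBC : B ≠ C := by
    rintro rfl
    exact h (by simpa [Set.insert_comm, Set.pair_comm] using collinear_pair ℝ A B)
  obtain ⟨a, t, ha, ht, hat, hDdef⟩ := hD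
  have haeq : a = 1 - t := by linarith
  subst haeq
  -- rewrite {B, C} as {C, B}
  have hpair : ({B, C} : Set E) = {C, B} := Set.pair_comm B C
  rw [hpair]
  set v₁ : E := B - A with hv1
  set v₂ : E := B - C with hv2
  have hDA : D - A = t • (C - A) := by rw [← hDdef]; module
  have hDC : D - C = (1 - t) • (A - C) := by rw [← hDdef]; module
  -- first term
  have e1 : Metric.infDist D (affineSpan ℝ ({A, B} : Set E) : Set E) =
      t * ‖(C - A) - ((inner ℝ (C - A) (v₁) : ℝ) / ‖v₁‖ ^ 2) • v₁‖ := by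
    rw [infDist_line_eq A B D hBA, hDA, ← hv1, real_inner_smul_left]
    have : t • (C - A) - (t * (inner ℝ (C - A) (v₁) : ℝ) / ‖v₁‖ ^ 2) • v₁ =
        t • ((C - A) - ((inner ℝ (C - A) (v₁) : ℝ) / ‖v₁‖ ^ 2) • v₁) := by
      rw [hv1]; module
    rw [this, norm_smul, Real.norm_eq_abs, abs_of_nonneg ht]
  have e2 : Metric.infDist D (affineSpan ℝ ({C, B} : Set E) : Set E) =
      (1 - t) * ‖(A - C) - ((inner ℝ (A - C) (v₂) : ℝ) / ‖v₂‖ ^ 2) • v₂‖ := by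
    rw [infDist_line_eq C B D hBC, hDC, ← hv2, real_inner_smul_left]
    have : (1 - t) • (A - C) - ((1 - t) * (inner ℝ (A - C) (v₂) : ℝ) / ‖v₂‖ ^ 2) • v₂ =
        (1 - t) • ((A - C) - ((inner ℝ (A - C) (v₂) : ℝ) / ‖v₂‖ ^ 2) • v₂) := by
      rw [hv2]; module
    rw [this, norm_smul, Real.norm_eq_abs, abs_of_nonneg (by linarith : (0:ℝ) ≤ 1 - t)]
  have e3 : Metric.infDist A (affineSpan ℝ ({C, B} : Set E) : Set E) =
      ‖(A - C) - ((inner ℝ (A - C) (v₂) : ℝ) / ‖v₂‖ ^ 2) • v₂‖ :=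
    infDist_line_eq C B A hBC
  -- the two residual norms are equal (isosceles condition)
  have hnorm : ‖v₁‖ = ‖v₂‖ := by
    rw [hv1, hv2, ← dist_eq_norm, ← dist_eq_norm, dist_comm B A]
    exact hAB
  have hkey : ‖(C - A) - ((inner ℝ (C - A) (v₁) : ℝ) / ‖v₁‖ ^ 2) • v₁‖ =
      ‖(A - C) - ((inner ℝ (A - C) (v₂) : ℝ) / ‖v₂‖ ^ 2) • v₂‖ := by
    rw [resid_eq_sqrt _ _ (sub_ne_zero.2 hBA), resid_eq_sqrt _ _ (sub_ne_zero.2 hBC)]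
    congr 1
    have h1 : ‖v₁‖ ^ 2 ≠ 0 := pow_ne_zero _ (norm_ne_zero_iff.2 (sub_ne_zero.2 hBA))
    have hAC : (A - C : E) = -(C - A) := by abel
    have hv21 : v₂ = v₁ - (C - A) := by rw [hv1, hv2]; abel
    have hinner : (inner ℝ (A - C) (v₂) : ℝ) = -((inner ℝ (C - A) (v₁) : ℝ) - (inner ℝ (C - A) (C - A) : ℝ)) := by
      rw [hAC, hv21, inner_neg_left, inner_sub_right]
    have hCA2 : (inner ℝ (C - A) (C - A) : ℝ) = 2 * (inner ℝ (C - A) (v₁) : ℝ) := by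
      have hexp : ‖v₂‖ ^ 2 = ‖v₁‖ ^ 2 - 2 * (inner ℝ (C - A) (v₁) : ℝ) + (inner ℝ (C - A) (C - A) : ℝ) := by
        rw [hv21, ← real_inner_self_eq_norm_sq, ← real_inner_self_eq_norm_sq,
          inner_sub_sub_self, real_inner_comm v₁ (C - A)]
        ring
      have h2 : ‖v₁‖ ^ 2 = ‖v₂‖ ^ 2 := by rw [hnorm]
      linarith [hexp]
    rw [hinner, hCA2, hAC, norm_neg, ← hnorm]
    ring
  rw [e1, e2, e3, hkey]
  ring

end
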